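/- Let d ≥ 3 and let O be a ring of S-integers in a number field. In Γ = PSL_d(O), let ε denote the image of the elementary matrix e_{1,d}(1). Then the center of the centralizer of ε in Γ equals E_{1,d}(O) = {image of e_{1,d}(a) : a ∈ O}; that is, Z(Cent_Γ(ε)) = {ē_{1,d}(a) : a ∈ O}. -/

import Mathlib

open Matrix IsDedekindDomain NumberField

/-- The elementary matrix `e_{i,j}(a)` as an element of `SL_n(A)`. -/
def elemSL {n : ℕ} {A : Type*} [CommRing A] (i j : Fin n) (h : i ≠ j) (a : A) :
    Matrix.SpecialLinearGroup (Fin n) A :=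
  ⟨Matrix.transvection i j a, Matrix.det_transvection_of_ne i j h a⟩

/-- `PSL_d(R) = SL_d(R) / Z(SL_d(R))`. -/
abbrev PSL (d : ℕ) (R : Type*) [CommRing R] : Type _ :=
  Matrix.SpecialLinearGroup (Fin d) R ⧸ Subgroup.center (Matrix.SpecialLinearGroup (Fin d) R)

section Aux

variable {d : ℕ} {R : Type*} [CommRing R]

lemma aux_transvection_comm {i j k l : Fin d} (hjk : j ≠ k) (hli : l ≠ i) (a b : R) :
    transvection i j a * transvection k l b = transvection k l b * transvection i j a := by
  have h1 : Matrix.single i j a * Matrix.single k l b = 0 :=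
    Matrix.single_mul_single_of_ne a i j k hjk b
  have h2 : Matrix.single k l b * Matrix.single i j a = 0 :=
    Matrix.single_mul_single_of_ne b k l i hli a
  simp only [transvection, add_mul, mul_add, one_mul, mul_one, h1, h2]
  abel

lemma aux_comm_of_E_comm {p q : Fin d} (N : Matrix (Fin d) (Fin d) R)
    (h : N * Matrix.single p q (1 : R) = Matrix.single p q (1 : R) * N) (a : R) :
    N * transvection p q a = transvection p q a * N := by
  have hE : Matrix.single p q a = a • Matrix.single p q (1 : R) := by
    rw [smul_single, smul_eq_mul, mul_one]
  simp only [transvection, mul_add, add_mul, mul_one, one_mul, hE, mul_smul_comm,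
    smul_mul_assoc, h]

lemma aux_comm_lift [IsDomain R] [CharZero R] (hd : 0 < d) {p q : Fin d} (hpq : p ≠ q)
    (N : Matrix.SpecialLinearGroup (Fin d) R)
    (hc : (QuotientGroup.mk N : PSL d R) * QuotientGroup.mk (elemSL p q hpq 1)
        = QuotientGroup.mk (elemSL p q hpq 1) * QuotientGroup.mk N) :
    N.val * Matrix.single p q (1 : R) = Matrix.single p q (1 : R) * N.val := by
  set τ : Matrix.SpecialLinearGroup (Fin d) R := elemSL p q hpq 1 with hτ
  have h1 : (QuotientGroup.mk (N * τ * N⁻¹) : PSL d R) = QuotientGroup.mk τ := by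
    rw [QuotientGroup.mk_mul, QuotientGroup.mk_mul, QuotientGroup.mk_inv, hc,
      mul_inv_cancel_right]
  have h2 : τ⁻¹ * (N * τ * N⁻¹) ∈ Subgroup.center (Matrix.SpecialLinearGroup (Fin d) R) :=
    QuotientGroup.eq.mp h1.symm
  obtain ⟨r, hr, hr'⟩ := Matrix.SpecialLinearGroup.mem_center_iff.mp h2
  have hX : ((N * τ * N⁻¹ : Matrix.SpecialLinearGroup (Fin d) R) : Matrix (Fin d) (Fin d) R)
      = (τ : Matrix (Fin d) (Fin d) R) * Matrix.scalar (Fin d) r := by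
    conv_lhs => rw [show N * τ * N⁻¹ = τ * (τ⁻¹ * (N * τ * N⁻¹)) by group]
    rw [Matrix.SpecialLinearGroup.coe_mul, ← hr']
  have hτval : (τ : Matrix (Fin d) (Fin d) R) = 1 + Matrix.single p q (1 : R) := rfl
  have htrτ : Matrix.trace ((τ : Matrix (Fin d) (Fin d) R)) = (d : R) := by
    rw [hτval, Matrix.trace_add, Matrix.trace_one,
      Matrix.trace_single_eq_of_ne p q (1 : R) hpq]
    simp
  have htr : Matrix.trace ((N * τ * N⁻¹ : Matrix.SpecialLinearGroup (Fin d) R)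
      : Matrix (Fin d) (Fin d) R) = (d : R) := by
    have h3 : N⁻¹ * (N * τ) = τ := by group
    calc Matrix.trace ((N * τ * N⁻¹ : Matrix.SpecialLinearGroup (Fin d) R)
          : Matrix (Fin d) (Fin d) R)
        = Matrix.trace (((N * τ : Matrix.SpecialLinearGroup (Fin d) R)
            : Matrix (Fin d) (Fin d) R) * ((N⁻¹ : Matrix.SpecialLinearGroup (Fin d) R)
            : Matrix (Fin d) (Fin d) R)) := by rw [Matrix.SpecialLinearGroup.coe_mul]
      _ = Matrix.trace (((N⁻¹ : Matrix.SpecialLinearGroup (Fin d) R)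
            : Matrix (Fin d) (Fin d) R) * ((N * τ : Matrix.SpecialLinearGroup (Fin d) R)
            : Matrix (Fin d) (Fin d) R)) := Matrix.trace_mul_comm _ _
      _ = Matrix.trace ((N⁻¹ * (N * τ) : Matrix.SpecialLinearGroup (Fin d) R)
            : Matrix (Fin d) (Fin d) R) := by
              simp only [Matrix.SpecialLinearGroup.coe_mul]
      _ = (d : R) := by rw [h3, htrτ]
  have hscal : (Matrix.scalar (Fin d) r : Matrix (Fin d) (Fin d) R)
      = r • (1 : Matrix (Fin d) (Fin d) R) := by
    rw [Matrix.smul_one_eq_diagonal]; rfl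
  have hdr : (d : R) = r * (d : R) := by
    have h6 := congrArg Matrix.trace hX
    rw [htr, hscal, mul_smul_comm, mul_one, Matrix.trace_smul, htrτ, smul_eq_mul] at h6
    exact h6
  have hr1 : r = 1 := by
    have h0 : (r - 1) * (d : R) = 0 := by linear_combination -hdr
    rcases mul_eq_zero.mp h0 with h | h
    · exact sub_eq_zero.mp h
    · exact absurd h (Nat.cast_ne_zero.mpr (by omega))
  have hNτ : N * τ * N⁻¹ = τ := by
    apply Subtype.ext
    rw [hX, hr1]
    simp
  have hcomm : N * τ = τ * N := mul_inv_eq_iff_eq_mul.mp hNτ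
  have hval : N.val * (1 + Matrix.single p q (1 : R))
      = (1 + Matrix.single p q (1 : R)) * N.val := by
    have h4 := congrArg Subtype.val hcomm
    simp only [Matrix.SpecialLinearGroup.coe_mul] at h4
    rw [hτval] at h4
    exact h4
  rw [mul_add, add_mul, mul_one, one_mul] at hval
  exact add_left_cancel hval

lemma aux_structure (hd : 2 < d) (M : Matrix.SpecialLinearGroup (Fin d) R)
    (hrow : ∀ j : Fin d, j ≠ ⟨0, by omega⟩ →
      M.val * Matrix.single (⟨0, by omega⟩ : Fin d) j (1 : R)
        = Matrix.single (⟨0, by omega⟩ : Fin d) j (1 : R) * M.val)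
    (hcol : ∀ i : Fin d, i ≠ ⟨d - 1, by omega⟩ →
      M.val * Matrix.single i (⟨d - 1, by omega⟩ : Fin d) (1 : R)
        = Matrix.single i (⟨d - 1, by omega⟩ : Fin d) (1 : R) * M.val) :
    ∃ a : R, (QuotientGroup.mk M : PSL d R)
      = QuotientGroup.mk (elemSL ⟨0, by omega⟩ ⟨d - 1, by omega⟩
          (by simp; omega) a) := by
  set z : Fin d := ⟨0, by omega⟩ with hz
  set w : Fin d := ⟨d - 1, by omega⟩ with hw
  have hzw : z ≠ w := by
    simp only [hz, hw, ne_eq, Fin.mk.injEq]; omega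
  set t : R := M.val w w with ht
  set s : R := M.val z w with hs
  have key : ∀ k l : Fin d, M.val k l
      = if k = z ∧ l = w then s else if k = l then t else 0 := by
    intro k l
    by_cases h1 : k = z ∧ l = w
    · rw [if_pos h1, h1.1, h1.2, ← hs]
    · rw [if_neg h1]
      by_cases hlw : l = w
      · have hkz : k ≠ z := fun hk => h1 ⟨hk, hlw⟩
        have h := congrFun (congrFun (hrow k hkz) z) w
        rw [Matrix.single_mul_apply_same (1 : R) z k w, one_mul] at h
        by_cases hkw : k = w
        · rw [hlw, hkw, if_pos rfl, ← ht]
        · have hwk : w ≠ k := Ne.symm hkw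
          rw [Matrix.mul_single_apply_of_ne (1 : R) z k z w hwk] at h
          have hkl : k ≠ l := by rw [hlw]; exact hkw
          rw [if_neg hkl, hlw, ← h]
      · have h := congrFun (congrFun (hcol l hlw) k) w
        rw [Matrix.mul_single_apply_same (1 : R) l w k, mul_one] at h
        by_cases hkl : k = l
        · subst hkl
          rw [if_pos rfl, ht]
          rw [Matrix.single_mul_apply_same (1 : R) k w w, one_mul] at h
          exact h
        · rw [if_neg hkl]
          rw [Matrix.single_mul_apply_of_ne (1 : R) l w k w hkl] at h
          exact h
  have htri : M.val.BlockTriangular id := by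
    intro k l hlk
    rw [key k l]
    have hc1 : ¬(k = z ∧ l = w) := by
      rintro ⟨rfl, rfl⟩
      have := hlk
      simp only [id_eq, hz, hw, Fin.mk_lt_mk] at this
      omega
    have hkl : k ≠ l := fun hh => absurd hlk (by rw [hh]; exact lt_irrefl _)
    simp [hc1, hkl]
  have hdet : t ^ d = 1 := by
    have hM := M.property
    rw [Matrix.det_of_upperTriangular htri] at hM
    have hprod : ∏ i : Fin d, M.val i i = t ^ d := by
      rw [Finset.prod_congr rfl (fun i _ => ?_)]
      · rw [Finset.prod_const, Finset.card_univ, Fintype.card_fin]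
      · rw [key i i]
        have hc2 : ¬(i = z ∧ i = w) := by rintro ⟨rfl, h2⟩; exact hzw h2
        simp [hc2]
    rw [hprod] at hM
    exact hM
  have htd : t ^ Fintype.card (Fin d) = 1 := by rw [Fintype.card_fin]; exact hdet
  refine ⟨t ^ (d - 1) * s, ?_⟩
  set a : R := t ^ (d - 1) * s with ha
  have hta : t * a = s := by
    rw [ha, ← mul_assoc, show t * t ^ (d - 1) = t ^ d by
      rw [← pow_succ']; congr 1; omega, hdet, one_mul]
  have hdetC : (Matrix.scalar (Fin d) t).det = 1 := by
    rw [show (Matrix.scalar (Fin d) t) = Matrix.diagonal (fun _ => t) from rfl,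
      Matrix.det_diagonal, Finset.prod_const, Finset.card_univ, Fintype.card_fin]
    exact hdet
  let C : Matrix.SpecialLinearGroup (Fin d) R := ⟨Matrix.scalar (Fin d) t, hdetC⟩
  have hCcenter : C ∈ Subgroup.center (Matrix.SpecialLinearGroup (Fin d) R) :=
    Matrix.SpecialLinearGroup.mem_center_iff.mpr ⟨t, htd, rfl⟩
  have hMat : M.val = Matrix.scalar (Fin d) t * transvection z w a := by
    ext k l
    rw [key k l, show (Matrix.scalar (Fin d) t) = Matrix.diagonal (fun _ => t) from rfl,
      Matrix.diagonal_mul]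
    show _ = t * (transvection z w a) k l
    rw [show (transvection z w a) k l
      = (1 : Matrix (Fin d) (Fin d) R) k l + Matrix.single z w a k l from rfl]
    by_cases h1 : k = z ∧ l = w
    · obtain ⟨rfl, rfl⟩ := h1
      rw [if_pos ⟨rfl, rfl⟩, Matrix.single_apply_same, Matrix.one_apply_ne hzw,
        zero_add]
      exact hta.symm
    · rw [if_neg h1, Matrix.single_apply_of_ne z w a k l
        (fun hh => h1 ⟨hh.1.symm, hh.2.symm⟩), add_zero]
      by_cases hkl : k = l
      · rw [if_pos hkl, hkl, Matrix.one_apply_eq, mul_one]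
      · rw [if_neg hkl, Matrix.one_apply_ne hkl, mul_zero]
  have hfact : M = C * elemSL z w hzw a := by
    apply Subtype.ext
    rw [Matrix.SpecialLinearGroup.coe_mul]
    exact hMat
  rw [hfact, QuotientGroup.mk_mul, (QuotientGroup.eq_one_iff _).mpr hCcenter, one_mul]

end Aux

/-- Let `d ≥ 3`, let `O` be a ring of `S`-integers in a number field, and
let `ε ∈ Γ = PSL_d(O)` be the image of `e_{1,d}(1)`. Then the center of the centralizer of
`ε` in `Γ` equals `{ē_{1,d}(a) : a ∈ O}`. -/
theorem center_centralizer_eq_elem (d : ℕ) (hd : 3 ≤ d) (K : Type) [Field K] [NumberField K]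
    (S : Finset (HeightOneSpectrum (𝓞 K)))
    (O : Subalgebra (𝓞 K) K) (hO : O = Set.integer (↑S : Set (HeightOneSpectrum (𝓞 K))) K)
    (ε : PSL d O)
    (hε : ε = QuotientGroup.mk (elemSL ⟨0, by omega⟩ ⟨d - 1, by omega⟩ (by simp; omega)
      (1 : O))) :
    ∀ x : PSL d O,
      x ∈ Subgroup.map (Subgroup.centralizer {ε}).subtype
          (Subgroup.center (Subgroup.centralizer {ε})) ↔
        ∃ a : O, x = QuotientGroup.mk
          (elemSL ⟨0, by omega⟩ ⟨d - 1, by omega⟩ (by simp; omega) a) := by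
  intro x
  set z : Fin d := ⟨0, by omega⟩ with hz
  set w : Fin d := ⟨d - 1, by omega⟩ with hw
  have hzw : z ≠ w := by simp only [hz, hw, ne_eq, Fin.mk.injEq]; omega
  constructor
  · intro hx
    rw [Subgroup.mem_map] at hx
    obtain ⟨⟨y, hyc⟩, hycen, rfl⟩ := hx
    obtain ⟨M, rfl⟩ := QuotientGroup.mk_surjective y
    have hcomm : ∀ (p q : Fin d) (hpq : p ≠ q),
        (QuotientGroup.mk (elemSL p q hpq 1) : PSL d O) ∈ Subgroup.centralizer {ε} →
        M.val * Matrix.single p q (1 : O) = Matrix.single p q (1 : O) * M.val := by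
      intro p q hpq hmem
      have h := Subgroup.mem_center_iff.mp hycen ⟨_, hmem⟩
      exact aux_comm_lift (by omega) hpq M (congrArg Subtype.val h).symm
    have hrow : ∀ j : Fin d, j ≠ z →
        M.val * Matrix.single z j (1 : O) = Matrix.single z j (1 : O) * M.val := by
      intro j hj
      refine hcomm z j (Ne.symm hj) ?_
      rw [hε, Subgroup.mem_centralizer_singleton_iff, ← QuotientGroup.mk_mul,
        ← QuotientGroup.mk_mul]
      exact congrArg _ (Subtype.ext (aux_transvection_comm hj hzw.symm 1 1))
    have hcol : ∀ i : Fin d, i ≠ w →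
        M.val * Matrix.single i w (1 : O) = Matrix.single i w (1 : O) * M.val := by
      intro i hi
      refine hcomm i w hi ?_
      rw [hε, Subgroup.mem_centralizer_singleton_iff, ← QuotientGroup.mk_mul,
        ← QuotientGroup.mk_mul]
      exact congrArg _ (Subtype.ext (aux_transvection_comm hzw.symm hi.symm 1 1))
    exact aux_structure hd M hrow hcol
  · rintro ⟨a, rfl⟩
    rw [Subgroup.mem_map]
    have hcent : (QuotientGroup.mk (elemSL z w hzw a) : PSL d O)
        ∈ Subgroup.centralizer {ε} := by
      rw [hε, Subgroup.mem_centralizer_singleton_iff, ← QuotientGroup.mk_mul,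
        ← QuotientGroup.mk_mul]
      exact congrArg _ (Subtype.ext (aux_transvection_comm hzw.symm hzw.symm a 1))
    refine ⟨⟨_, hcent⟩, ?_, rfl⟩
    rw [Subgroup.mem_center_iff]
    rintro ⟨g, hg⟩
    obtain ⟨N, rfl⟩ := QuotientGroup.mk_surjective g
    have hg' : (QuotientGroup.mk N : PSL d O) * QuotientGroup.mk (elemSL z w hzw 1)
        = QuotientGroup.mk (elemSL z w hzw 1) * QuotientGroup.mk N := by
      have h5 := Subgroup.mem_centralizer_singleton_iff.mp hg
      rw [hε] at h5
      exact h5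
    have hNE := aux_comm_lift (by omega) hzw N hg'
    apply Subtype.ext
    show (QuotientGroup.mk N : PSL d O) * QuotientGroup.mk (elemSL z w hzw a)
        = QuotientGroup.mk (elemSL z w hzw a) * QuotientGroup.mk N
    rw [← QuotientGroup.mk_mul, ← QuotientGroup.mk_mul]
    exact congrArg _ (Subtype.ext (aux_comm_of_E_comm N.val hNE a))
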